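/- For every integer p ≥ 4, the density ρ_p = (3/(p−3))·((1/2) csc(π/(2p)) − 1) satisfies ρ_p < 3/π. -/

import Mathlib

open Real

private lemma aux1 (P q : ℝ) (hP : 5 ≤ P) (hq : 3.141592 < q)
    (hq2 : q ^ 2 < 9.9225) (hq3 : q ^ 3 < 31.26) :
    (0:ℝ) < (16 * q - 48) * P ^ 2 - q ^ 2 * P - q ^ 3 + 3 * q ^ 2 := by
  nlinarith [mul_le_mul_of_nonneg_left hP (by linarith : (0:ℝ) ≤ P)]

private lemma aux2 (P q : ℝ) (hq : 0 < q)
    (h : (0:ℝ) < (16 * q - 48) * P ^ 2 - q ^ 2 * P - q ^ 3 + 3 * q ^ 2) :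
    16 * P ^ 3 * q < (P + q - 3) * (q * (16 * P ^ 2 - q ^ 2)) := by
  nlinarith [mul_pos hq h]

/-- The triangle-orbifold packing density is below the bound `3/π`. -/
theorem triangle_packing_density_lt (p : ℕ) (hp : 4 ≤ p) :
    (3 / ((p : ℝ) - 3)) * ((1 / 2) * (Real.sin (π / (2 * p)))⁻¹ - 1) < 3 / π := by
  have hπl : (3.141592 : ℝ) < π := Real.pi_gt_d6
  have hπu : π < 3.15 := Real.pi_lt_d2
  rcases eq_or_lt_of_le hp with h4 | h5
  · -- p = 4
    subst h4
    have h2sq : (Real.sqrt 2) ^ 2 = 2 := Real.sq_sqrt (by norm_num)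
    have h2pos : (0:ℝ) < Real.sqrt 2 := Real.sqrt_pos.2 (by norm_num)
    have h2lt : Real.sqrt 2 < 1.415 := by nlinarith
    have hrpos : (0:ℝ) < Real.sqrt (2 - Real.sqrt 2) := Real.sqrt_pos.2 (by nlinarith)
    have hrsq : (Real.sqrt (2 - Real.sqrt 2)) ^ 2 = 2 - Real.sqrt 2 :=
      Real.sq_sqrt (by nlinarith)
    have hs : Real.sin (π / (2 * ((4:ℕ):ℝ))) = Real.sqrt (2 - Real.sqrt 2) / 2 := by
      norm_num [Real.sin_pi_div_eight]
    rw [hs, inv_div]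
    set r := Real.sqrt (2 - Real.sqrt 2) with hr
    have hkey : π < r * (1 + π) := by
      nlinarith [sq_nonneg (r * (1 + π) - π), hrsq, hrpos, h2lt]
    have hu : r * r⁻¹ = 1 := mul_inv_cancel₀ hrpos.ne'
    have hupos : (0:ℝ) < r⁻¹ := inv_pos.2 hrpos
    have h1 : (2 : ℝ) / r = 2 * r⁻¹ := div_eq_mul_inv 2 r
    rw [h1]
    push_cast
    rw [lt_div_iff₀ Real.pi_pos]
    nlinarith [mul_lt_mul_of_pos_left hkey hupos, hu, hupos, Real.pi_pos]
  · -- p ≥ 5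
    have hP : (5:ℝ) ≤ (p:ℝ) := by exact_mod_cast h5
    set P := (p:ℝ) with hPdef
    have hPpos : (0:ℝ) < P := by linarith
    have hP3 : (0:ℝ) < P - 3 := by linarith
    set x := π / (2 * P) with hxdef
    have hxpos : 0 < x := by positivity
    have hx1 : x ≤ 1 := by
      rw [hxdef, div_le_one (by positivity)]
      linarith
    have hsin : x - x ^ 3 / 4 < Real.sin x := by
      have := Real.sin_gt_sub_cube hxpos
      linarith [pow_pos hxpos 3]
    have hLpos : 0 < x - x ^ 3 / 4 := by
      nlinarith [mul_nonneg (sub_nonneg.2 hx1) (sq_nonneg x),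
        mul_nonneg (sub_nonneg.2 hx1) hxpos.le, hxpos]
    have hπ2u : π ^ 2 < 9.9225 := by nlinarith
    have hπ2l : (9.8 : ℝ) < π ^ 2 := by nlinarith
    have hπ3u : π ^ 3 < 31.26 := by nlinarith [Real.pi_pos]
    have hden : (0:ℝ) < 16 * P ^ 2 - π ^ 2 := by nlinarith
    have key : (3 / (P - 3)) * ((1 / 2) * (x - x ^ 3 / 4)⁻¹ - 1) < 3 / π := by
      have hLeq : (1 / 2 : ℝ) * (x - x ^ 3 / 4)⁻¹ =
          16 * P ^ 3 / (π * (16 * P ^ 2 - π ^ 2)) := by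
        rw [hxdef]
        rw [show π / (2 * P) - (π / (2 * P)) ^ 3 / 4
            = π * (16 * P ^ 2 - π ^ 2) / (32 * P ^ 3) by field_simp; ring]
        rw [inv_div]
        field_simp
        ring
      have h := aux1 P π hP hπl hπ2u hπ3u
      have hQ : 16 * P ^ 3 / (π * (16 * P ^ 2 - π ^ 2)) < (P + π - 3) / π := by
        rw [div_lt_div_iff₀ (by positivity) Real.pi_pos]
        exact aux2 P π Real.pi_pos h
      have heq : (3 / (P - 3)) * ((P + π - 3) / π - 1) = 3 / π := by
        field_simp
        ring
      calc (3 / (P - 3)) * ((1 / 2) * (x - x ^ 3 / 4)⁻¹ - 1)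
          = (3 / (P - 3)) * (16 * P ^ 3 / (π * (16 * P ^ 2 - π ^ 2)) - 1) := by rw [hLeq]
        _ < (3 / (P - 3)) * ((P + π - 3) / π - 1) := by
            apply mul_lt_mul_of_pos_left (by linarith) (by positivity)
        _ = 3 / π := heq
    calc (3 / (P - 3)) * ((1 / 2) * (Real.sin x)⁻¹ - 1)
        ≤ (3 / (P - 3)) * ((1 / 2) * (x - x ^ 3 / 4)⁻¹ - 1) := by
          gcongr 3 / (P - 3) * ((1 / 2) * ?_ - 1)
          exact inv_anti₀ hLpos hsin.le
      _ < 3 / π := key
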